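/- arXiv:2510.25689 — 7 statements merged into one kernel-verified Lean document; each statement's English description precedes it below -/
import Mathlib

section
/- Let G be a non-complete simple graph on n vertices and let r be an integer with r ≤ n−3. If deg(u) + deg(v) ≥ n + r for every pair of non-adjacent vertices u, v of G, then G is (r+2)-connected. -/
private lemma exists_mem_not_mem_of_card_lt {α : Type*} [DecidableEq α] {s t : Finset α}
    (h : s.card < t.card) : ∃ w ∈ t, w ∉ s := by
  by_contra hc
  push_neg at hc
  exact absurd (Finset.card_le_card hc) (not_le.mpr h)

/-- If `G` is a non-complete graph on `n` vertices, `r ≤ n - 3`, and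
`deg u + deg v ≥ n + r` for all non-adjacent pairs, then `G` is `(r+2)`-connected,
i.e. it has at least `r + 3` vertices and removing fewer than `r + 2` vertices
leaves it connected. -/
theorem stmt_0 {V : Type*} [Fintype V] [DecidableEq V] (G : SimpleGraph V)
    [DecidableRel G.Adj] (r : ℤ) (hnc : G ≠ ⊤)
    (hr : r ≤ (Fintype.card V : ℤ) - 3)
    (hdeg : ∀ u v : V, u ≠ v → ¬ G.Adj u v →
      (Fintype.card V : ℤ) + r ≤ (G.degree u : ℤ) + (G.degree v : ℤ)) :
    r + 3 ≤ (Fintype.card V : ℤ) ∧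
      ∀ S : Finset V, (S.card : ℤ) < r + 2 →
        (G.induce ((↑S : Set V)ᶜ)).Connected := by
  have hn : r + 3 ≤ (Fintype.card V : ℤ) := by linarith
  refine ⟨hn, fun S hS => ?_⟩
  -- key: for nonadjacent a b outside S, a common neighbor outside S exists
  have key : ∀ a b : V, a ≠ b → ¬ G.Adj a b →
      ∃ w, w ∉ S ∧ G.Adj a w ∧ G.Adj b w := by
    intro a b hab hnadj
    set A := G.neighborFinset a with hA
    set B := G.neighborFinset b with hB
    have hsub : A ∪ B ⊆ Finset.univ \ {a, b} := by
      intro w hw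
      simp only [Finset.mem_sdiff, Finset.mem_univ, true_and, Finset.mem_insert,
        Finset.mem_singleton]
      rcases Finset.mem_union.mp hw with h | h
      · rw [hA, SimpleGraph.mem_neighborFinset] at h
        push_neg
        exact ⟨fun e => G.loopless.irrefl a (e ▸ h), fun e => hnadj (e ▸ h)⟩
      · rw [hB, SimpleGraph.mem_neighborFinset] at h
        push_neg
        exact ⟨fun e => hnadj (e ▸ h).symm, fun e => G.loopless.irrefl b (e ▸ h)⟩
    have hcard2 : ({a, b} : Finset V).card = 2 := by
      rw [Finset.card_insert_of_notMem (by simpa using hab), Finset.card_singleton]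
    have hunion : ((A ∪ B).card : ℤ) ≤ (Fintype.card V : ℤ) - 2 := by
      have := Finset.card_le_card hsub
      rw [Finset.card_sdiff_of_subset (by simp), Finset.card_univ, hcard2] at this
      have h2 : 2 ≤ Fintype.card V := by
        have : ({a, b} : Finset V).card ≤ Fintype.card V := by
          rw [← Finset.card_univ]; exact Finset.card_le_card (Finset.subset_univ _)
        omega
      omega
    have hsum : (A ∪ B).card + (A ∩ B).card = A.card + B.card :=
      Finset.card_union_add_card_inter A B
    have hdegab := hdeg a b hab hnadj
    have hAcard : A.card = G.degree a := rfl
    have hBcard : B.card = G.degree b := rfl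
    have hinter : (S.card : ℤ) < ((A ∩ B).card : ℤ) := by
      have : ((A ∪ B).card : ℤ) + ((A ∩ B).card : ℤ) = (G.degree a : ℤ) + (G.degree b : ℤ) := by
        exact_mod_cast hAcard ▸ hBcard ▸ congrArg (Nat.cast : ℕ → ℤ) hsum
      linarith
    obtain ⟨w, hwT, hwS⟩ := exists_mem_not_mem_of_card_lt (by exact_mod_cast hinter)
    rw [Finset.mem_inter, SimpleGraph.mem_neighborFinset, SimpleGraph.mem_neighborFinset] at hwT
    exact ⟨w, hwS, hwT.1, hwT.2⟩
  rw [SimpleGraph.connected_iff]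
  constructor
  · rintro ⟨a, ha⟩ ⟨b, hb⟩
    by_cases hab : a = b
    · subst hab; rfl
    by_cases hadj : G.Adj a b
    · exact SimpleGraph.Adj.reachable (by simpa using hadj)
    · obtain ⟨w, hwS, haw, hbw⟩ := key a b hab hadj
      have hw : w ∈ ((↑S : Set V)ᶜ) := hwS
      refine (SimpleGraph.Adj.reachable (v := ⟨w, hw⟩) (by simpa using haw)).trans
        (SimpleGraph.Adj.reachable (by simpa using hbw.symm))
  · have hlt : (S.card : ℤ) < (Fintype.card V : ℤ) := by linarith
    have : S ≠ Finset.univ := by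
      intro h; rw [h, Finset.card_univ] at hlt; exact absurd hlt (lt_irrefl _)
    obtain ⟨x, -, hx⟩ := exists_mem_not_mem_of_card_lt (s := S) (t := (Finset.univ : Finset V))
      (by rw [Finset.card_univ]; exact_mod_cast hlt)
    exact ⟨⟨x, hx⟩⟩
end

section
/- Let M be a matroid on ground set E with rank function r, such that every circuit of M has size at least d + 1 (equivalently, every subset of E of size at most d is independent). Let i be an integer with d ≤ i ≤ |E| and let A be a uniformly random subset of E of size i. Then the expected value of r(A) is at least d + (r(E) − d)·(i − d)/(|E| − d), where the last term is interpreted as 0 if |E| = d. -/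
noncomputable def matroidRank {α : Type*} (M : Matroid α) (X : Set α) : ℕ :=
  sSup {n : ℕ | ∃ I : Set α, I ⊆ X ∧ M.Indep I ∧ I.ncard = n}

namespace Stmt5Aux
open Set

variable {α : Type*} {M : Matroid α} {X Y B I : Set α}

lemma rank_eq_of_basis [M.Finite] (hB : M.IsBasis B X) : matroidRank M X = B.ncard := by
  have hXE : X ⊆ M.E := hB.subset_ground
  unfold matroidRank
  apply le_antisymm
  · apply csSup_le
    · exact ⟨B.ncard, B, hB.subset, hB.indep, rfl⟩
    rintro n ⟨I, hIX, hI, rfl⟩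
    obtain ⟨J, hJ, hIJ⟩ := hI.subset_isBasis_of_subset hIX hXE
    have hJB : J.ncard = B.ncard :=
      (hJ.isBase_restrict).ncard_eq_ncard_of_isBase (hB.isBase_restrict)
    calc I.ncard ≤ J.ncard := Set.ncard_le_ncard hIJ (M.set_finite J hJ.indep.subset_ground)
    _ = B.ncard := hJB
  · apply le_csSup
    · refine ⟨M.E.ncard, ?_⟩
      rintro n ⟨I, hIX, hI, rfl⟩
      exact Set.ncard_le_ncard hI.subset_ground M.ground_finite
    · exact ⟨B, hB.subset, hB.indep, rfl⟩

lemma rank_indep [M.Finite] (hI : M.Indep I) : matroidRank M I = I.ncard :=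
  rank_eq_of_basis hI.isBasis_self

lemma rank_mono [M.Finite] (hXY : X ⊆ Y) (hY : Y ⊆ M.E) :
    matroidRank M X ≤ matroidRank M Y := by
  obtain ⟨B, hB⟩ := M.exists_isBasis X (hXY.trans hY)
  obtain ⟨B', hB', hBB'⟩ := hB.indep.subset_isBasis_of_subset (hB.subset.trans hXY) hY
  rw [rank_eq_of_basis hB, rank_eq_of_basis hB']
  exact Set.ncard_le_ncard hBB' (M.set_finite B' hB'.indep.subset_ground)

lemma rank_submod [M.Finite] (hX : X ⊆ M.E) (hY : Y ⊆ M.E) :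
    matroidRank M (X ∩ Y) + matroidRank M (X ∪ Y) ≤ matroidRank M X + matroidRank M Y := by
  obtain ⟨I, hI⟩ := M.exists_isBasis (X ∩ Y) ((inter_subset_left).trans hX)
  obtain ⟨J, hJ, hIJ⟩ := hI.indep.subset_isBasis_of_subset
    (hI.subset.trans ((inter_subset_left).trans subset_union_left)) (union_subset hX hY)
  rw [rank_eq_of_basis hI, rank_eq_of_basis hJ]
  have hJfin : J.Finite := M.set_finite J hJ.indep.subset_ground
  have h1 : matroidRank M X ≥ (J ∩ X).ncard := by
    rw [← rank_indep (hJ.indep.inter_right X)]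
    exact rank_mono inter_subset_right hX
  have h2 : matroidRank M Y ≥ (J ∩ Y).ncard := by
    rw [← rank_indep (hJ.indep.inter_right Y)]
    exact rank_mono inter_subset_right hY
  have hcard : (J ∩ X).ncard + (J ∩ Y).ncard = (J ∩ (X ∪ Y)).ncard + (J ∩ (X ∩ Y)).ncard := by
    rw [inter_union_distrib_left, inter_inter_distrib_left]
    rw [Set.ncard_union_add_ncard_inter _ _ (hJfin.inter_of_left X) (hJfin.inter_of_left Y)]
  have hJX : J ∩ (X ∪ Y) = J := inter_eq_self_of_subset_left hJ.subset
  have hIJ2 : I.ncard ≤ (J ∩ (X ∩ Y)).ncard :=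
    Set.ncard_le_ncard (subset_inter hIJ hI.subset) (hJfin.inter_of_left _)
  rw [hJX] at hcard
  omega

variable [DecidableEq α]

lemma step_sum (E : Finset α) (f : Finset α → ℚ) (j : ℕ) :
    ∑ S ∈ E.powersetCard j, ∑ x ∈ E \ S, f (insert x S)
      = ((j : ℚ)+1) * ∑ T ∈ E.powersetCard (j+1), f T := by
  have h1 : ∑ T ∈ E.powersetCard (j+1), ∑ _x ∈ T, f T
       = ∑ S ∈ E.powersetCard j, ∑ x ∈ E \ S, f (insert x S) := by
    rw [Finset.sum_sigma', Finset.sum_sigma']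
    refine Finset.sum_bij' (fun p _ => ⟨p.1.erase p.2, p.2⟩)
      (fun p _ => ⟨insert p.2 p.1, p.2⟩) ?_ ?_ ?_ ?_ ?_
    · rintro ⟨T, x⟩ hp
      simp only [Finset.mem_sigma, Finset.mem_powersetCard] at hp ⊢
      refine ⟨⟨(Finset.erase_subset _ _).trans hp.1.1, ?_⟩, ?_⟩
      · rw [Finset.card_erase_of_mem hp.2, hp.1.2]; omega
      · simp [Finset.mem_sdiff, hp.1.1 hp.2]
    · rintro ⟨S, x⟩ hp
      simp only [Finset.mem_sigma, Finset.mem_powersetCard, Finset.mem_sdiff] at hp ⊢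
      refine ⟨⟨Finset.insert_subset hp.2.1 hp.1.1, ?_⟩, Finset.mem_insert_self _ _⟩
      rw [Finset.card_insert_of_notMem hp.2.2, hp.1.2]
    · rintro ⟨T, x⟩ hp
      simp only [Finset.mem_sigma] at hp
      simp [Finset.insert_erase hp.2]
    · rintro ⟨S, x⟩ hp
      simp only [Finset.mem_sigma, Finset.mem_sdiff] at hp
      simp [Finset.erase_insert_of_ne, Finset.erase_eq_of_notMem hp.2.2]
    · rintro ⟨T, x⟩ hp
      simp only [Finset.mem_sigma] at hp
      simp [Finset.insert_erase hp.2]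
  rw [← h1, Finset.mul_sum]
  refine Finset.sum_congr rfl fun T hT => ?_
  rw [Finset.sum_const, (Finset.mem_powersetCard.mp hT).2]
  ring

variable {E : Finset α}

/-- shorthand -/
noncomputable def G (M : Matroid α) (E : Finset α) (j : ℕ) : ℚ :=
  ∑ A ∈ E.powersetCard j, (matroidRank M ↑A : ℚ)

lemma G_nonneg (M : Matroid α) (E : Finset α) (j : ℕ) : 0 ≤ G M E j :=
  Finset.sum_nonneg fun _ _ => by positivity

lemma mempc {S : Finset α} {j : ℕ} (hS : S ∈ E.powersetCard j) : S ⊆ E ∧ S.card = j :=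
  Finset.mem_powersetCard.mp hS

lemma rank_le_insert [M.Finite] (hE : M.E = ↑E) {S : Finset α} (hS : S ⊆ E) {x : α}
    (hx : x ∈ E) : (matroidRank M ↑S : ℚ) ≤ (matroidRank M ↑(insert x S) : ℚ) := by
  have : matroidRank M ↑S ≤ matroidRank M ↑(insert x S) := by
    apply rank_mono
    · rw [Finset.coe_insert]; exact Set.subset_insert _ _
    · rw [hE]; exact_mod_cast Finset.insert_subset hx hS
  exact_mod_cast this

lemma G_mono (hE : M.E = ↑E) [M.Finite] (j : ℕ) (hj : j + 1 ≤ E.card) :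
    ((E.card : ℚ) - j) * G M E j ≤ ((j : ℚ) + 1) * G M E (j+1) := by
  rw [G, G, ← step_sum E (fun T => (matroidRank M ↑T : ℚ)) j]
  have : ((E.card : ℚ) - j) * ∑ A ∈ E.powersetCard j, (matroidRank M ↑A : ℚ)
      = ∑ S ∈ E.powersetCard j, ∑ _x ∈ E \ S, (matroidRank M ↑S : ℚ) := by
    rw [Finset.mul_sum]
    refine Finset.sum_congr rfl fun S hS => ?_
    obtain ⟨hSE, hSc⟩ := mempc hS
    rw [Finset.sum_const, Finset.card_sdiff_of_subset hSE, hSc]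
    have h1 : j ≤ E.card := by omega
    rw [nsmul_eq_mul, Nat.cast_sub h1]
  rw [this]
  refine Finset.sum_le_sum fun S hS => Finset.sum_le_sum fun x hx => ?_
  obtain ⟨hSE, _⟩ := mempc hS
  exact rank_le_insert hE hSE (Finset.mem_sdiff.mp hx).1

lemma rank_submod_insert [M.Finite] (hE : M.E = ↑E) {S : Finset α} (hS : S ⊆ E) {x y : α}
    (hx : x ∈ E \ S) (hy : y ∈ E \ insert x S) :
    (matroidRank M ↑S : ℚ) + (matroidRank M ↑(insert y (insert x S)) : ℚ)
      ≤ (matroidRank M ↑(insert x S) : ℚ) + (matroidRank M ↑(insert y S) : ℚ) := by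
  obtain ⟨hxE, hxS⟩ := Finset.mem_sdiff.mp hx
  obtain ⟨hyE, hyxS⟩ := Finset.mem_sdiff.mp hy
  have hyS : y ∉ S := fun h => hyxS (Finset.mem_insert_of_mem h)
  have hxy : y ≠ x := fun h => hyxS (h ▸ Finset.mem_insert_self _ _)
  have hinter : (↑(insert x S) : Set α) ∩ ↑(insert y S) = ↑S := by
    ext a
    simp only [Finset.coe_insert, Set.mem_inter_iff, Set.mem_insert_iff, Finset.mem_coe]
    constructor
    · rintro ⟨h1 | h1, h2 | h2⟩
      · exact absurd (h2.symm.trans h1) hxy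
      · exact h2
      · exact h1
      · exact h1
    · exact fun h => ⟨Or.inr h, Or.inr h⟩
  have hunion : (↑(insert x S) : Set α) ∪ ↑(insert y S) = ↑(insert y (insert x S)) := by
    ext a
    simp only [Finset.coe_insert, Set.mem_union, Set.mem_insert_iff, Finset.mem_coe]
    tauto
  have hx' : (↑(insert x S) : Set α) ⊆ M.E := by
    rw [hE, Finset.coe_insert]
    exact_mod_cast Finset.insert_subset hxE hS
  have hy' : (↑(insert y S) : Set α) ⊆ M.E := by
    rw [hE, Finset.coe_insert]
    exact_mod_cast Finset.insert_subset hyE hS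
  have hsub := rank_submod hx' hy'
  rw [hinter, hunion] at hsub
  exact_mod_cast hsub

lemma G_concave (hE : M.E = ↑E) [M.Finite] (j : ℕ) (hj : j + 2 ≤ E.card) :
    ((E.card : ℚ) - j) * ((E.card : ℚ) - j - 1) * G M E j
      + ((j : ℚ) + 2) * ((j : ℚ) + 1) * G M E (j+2)
      ≤ 2 * ((j : ℚ) + 1) * ((E.card : ℚ) - j - 1) * G M E (j+1) := by
  set F : Finset α → ℚ := fun T => (matroidRank M ↑T : ℚ) with hF
  have hje : j ≤ E.card := by omega
  have hje1 : j + 1 ≤ E.card := by omega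
  -- the summed pointwise inequality
  have hpoint : ∑ S ∈ E.powersetCard j, ∑ x ∈ E \ S, ∑ y ∈ E \ insert x S,
        (F S + F (insert y (insert x S)))
      ≤ ∑ S ∈ E.powersetCard j, ∑ x ∈ E \ S, ∑ y ∈ E \ insert x S,
        (F (insert x S) + F (insert y S)) := by
    refine Finset.sum_le_sum fun S hS => Finset.sum_le_sum fun x hx =>
      Finset.sum_le_sum fun y hy => ?_
    exact rank_submod_insert hE (mempc hS).1 hx hy
  -- A term
  have hA : ∑ S ∈ E.powersetCard j, ∑ x ∈ E \ S, ∑ _y ∈ E \ insert x S, F S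
      = ((E.card : ℚ) - j) * ((E.card : ℚ) - j - 1) * G M E j := by
    rw [G, Finset.mul_sum]
    refine Finset.sum_congr rfl fun S hS => ?_
    obtain ⟨hSE, hSc⟩ := mempc hS
    have h1 : ∀ x ∈ E \ S, ∑ _y ∈ E \ insert x S, F S = ((E.card : ℚ) - j - 1) * F S := by
      intro x hx
      obtain ⟨hxE, hxS⟩ := Finset.mem_sdiff.mp hx
      rw [Finset.sum_const, Finset.card_sdiff_of_subset (Finset.insert_subset hxE hSE),
        Finset.card_insert_of_notMem hxS, hSc]
      rw [nsmul_eq_mul, Nat.cast_sub hje1]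
      push_cast
      ring
    rw [Finset.sum_congr rfl h1, Finset.sum_const, Finset.card_sdiff_of_subset hSE, hSc]
    rw [nsmul_eq_mul, Nat.cast_sub hje]
    push_cast
    ring
  -- B term
  have hB : ∑ S ∈ E.powersetCard j, ∑ x ∈ E \ S, ∑ y ∈ E \ insert x S,
        F (insert y (insert x S))
      = ((j : ℚ) + 1) * (((j : ℚ) + 2) * G M E (j+2)) := by
    have := step_sum E (fun T => ∑ y ∈ E \ T, F (insert y T)) j
    rw [this, step_sum E F (j+1)]
    rw [G]
    push_cast
    ring
  -- C term
  have hC : ∑ S ∈ E.powersetCard j, ∑ x ∈ E \ S, ∑ _y ∈ E \ insert x S, F (insert x S)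
      = ((j : ℚ) + 1) * (((E.card : ℚ) - j - 1) * G M E (j+1)) := by
    have h1 : ∑ S ∈ E.powersetCard j, ∑ x ∈ E \ S, ∑ _y ∈ E \ insert x S, F (insert x S)
        = ∑ S ∈ E.powersetCard j, ∑ x ∈ E \ S,
            (fun T => ((E.card : ℚ) - j - 1) * F T) (insert x S) := by
      refine Finset.sum_congr rfl fun S hS => Finset.sum_congr rfl fun x hx => ?_
      obtain ⟨hSE, hSc⟩ := mempc hS
      obtain ⟨hxE, hxS⟩ := Finset.mem_sdiff.mp hx
      rw [Finset.sum_const, Finset.card_sdiff_of_subset (Finset.insert_subset hxE hSE),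
        Finset.card_insert_of_notMem hxS, hSc]
      rw [nsmul_eq_mul, Nat.cast_sub hje1]
      push_cast
      ring
    rw [h1, step_sum E (fun T => ((E.card : ℚ) - j - 1) * F T) j, G, Finset.mul_sum,
      Finset.mul_sum, Finset.mul_sum]
  -- D term
  have hD : ∑ S ∈ E.powersetCard j, ∑ x ∈ E \ S, ∑ y ∈ E \ insert x S, F (insert y S)
      = ((E.card : ℚ) - j - 1) * (((j : ℚ) + 1) * G M E (j+1)) := by
    have h1 : ∀ S ∈ E.powersetCard j, ∑ x ∈ E \ S, ∑ y ∈ E \ insert x S, F (insert y S)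
        = ((E.card : ℚ) - j - 1) * ∑ y ∈ E \ S, F (insert y S) := by
      intro S hS
      obtain ⟨hSE, hSc⟩ := mempc hS
      have h2 : ∀ x ∈ E \ S, ∑ y ∈ E \ insert x S, F (insert y S)
          = (∑ y ∈ E \ S, F (insert y S)) - F (insert x S) := by
        intro x hx
        rw [Finset.sdiff_insert, Finset.sum_erase_eq_sub hx]
      rw [Finset.sum_congr rfl h2, Finset.sum_sub_distrib, Finset.sum_const,
        Finset.card_sdiff_of_subset hSE, hSc]
      rw [nsmul_eq_mul, Nat.cast_sub hje]
      push_cast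
      ring
    rw [Finset.sum_congr rfl h1, ← Finset.mul_sum,
      step_sum E (fun T => F T) j, G]
  simp only [Finset.sum_add_distrib] at hpoint
  rw [hA, hB, hC, hD] at hpoint
  linarith


noncomputable def Fq (M : Matroid α) (E : Finset α) (j : ℕ) : ℚ :=
  G M E j / ((E.card.choose j : ℚ))

lemma choose_id1 (n j : ℕ) (hj : j + 1 ≤ n) :
    ((n.choose (j+1) : ℚ)) * ((j:ℚ)+1) = (n.choose j : ℚ) * ((n:ℚ) - j) := by
  rw [← Nat.cast_sub (by omega : j ≤ n)]
  exact_mod_cast Nat.choose_succ_right_eq n j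

lemma Fq_mono (hE : M.E = ↑E) [M.Finite] (j : ℕ) (hj : j + 1 ≤ E.card) :
    Fq M E j ≤ Fq M E (j+1) := by
  have hc0 : (0:ℚ) < (E.card.choose j : ℚ) := by
    exact_mod_cast Nat.choose_pos (by omega)
  have hc1 : (0:ℚ) < (E.card.choose (j+1) : ℚ) := by exact_mod_cast Nat.choose_pos hj
  rw [Fq, Fq, div_le_div_iff₀ hc0 hc1]
  have id1 := choose_id1 E.card j hj
  have key := G_mono hE j hj
  have h2 : (G M E j * (E.card.choose (j+1) : ℚ)) * ((j:ℚ)+1)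
      ≤ (G M E (j+1) * (E.card.choose j : ℚ)) * ((j:ℚ)+1) := by
    calc (G M E j * (E.card.choose (j+1) : ℚ)) * ((j:ℚ)+1)
        = (((E.card:ℚ) - j) * G M E j) * (E.card.choose j : ℚ) := by
          linear_combination (G M E j) * id1
      _ ≤ (((j:ℚ)+1) * G M E (j+1)) * (E.card.choose j : ℚ) :=
          mul_le_mul_of_nonneg_right key hc0.le
      _ = (G M E (j+1) * (E.card.choose j : ℚ)) * ((j:ℚ)+1) := by ring
  exact le_of_mul_le_mul_right h2 (by positivity)

lemma Fq_concave (hE : M.E = ↑E) [M.Finite] (j : ℕ) (hj : j + 2 ≤ E.card) :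
    Fq M E j + Fq M E (j+2) ≤ 2 * Fq M E (j+1) := by
  set n := E.card with hn
  have hc0 : (0:ℚ) < (n.choose j : ℚ) := by exact_mod_cast Nat.choose_pos (by omega)
  have hc1 : (0:ℚ) < (n.choose (j+1) : ℚ) := by exact_mod_cast Nat.choose_pos (by omega)
  have hc2 : (0:ℚ) < (n.choose (j+2) : ℚ) := by exact_mod_cast Nat.choose_pos hj
  have id1 := choose_id1 n j (by omega)
  have id2 : ((n.choose (j+2) : ℚ)) * ((j:ℚ)+2) = (n.choose (j+1) : ℚ) * ((n:ℚ) - j - 1) := by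
    have := choose_id1 n (j+1) hj
    push_cast at this ⊢
    linarith [this]
  have key := G_concave hE j hj
  rw [Fq, Fq, Fq, ← hn, div_add_div _ _ hc0.ne' hc2.ne', mul_div_assoc' 2,
    div_le_div_iff₀ (by positivity) hc1]
  set a0 := (n.choose j : ℚ)
  set a1 := (n.choose (j+1) : ℚ)
  set a2 := (n.choose (j+2) : ℚ)
  set g0 := G M E j
  set g1 := G M E (j+1)
  set g2 := G M E (j+2)
  have hp : (0:ℚ) < ((j:ℚ)+1) * (((j:ℚ)+1) * ((j:ℚ)+2)) := by positivity
  have hL : ((g0 * a2 + a0 * g2) * a1) * (((j:ℚ)+1) * (((j:ℚ)+1) * ((j:ℚ)+2)))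
      = (a0 * a0 * ((n:ℚ)-j)) * (((n:ℚ)-j) * ((n:ℚ)-j-1) * g0 + ((j:ℚ)+2) * ((j:ℚ)+1) * g2) := by
    linear_combination (g0 * a1 * ((j:ℚ)+1)^2) * id2
      + (g0 * ((n:ℚ)-j-1) * (a1 * ((j:ℚ)+1) + a0 * ((n:ℚ)-j))
          + a0 * g2 * ((j:ℚ)+1) * ((j:ℚ)+2)) * id1
  have hR : (2 * g1 * (a0 * a2)) * (((j:ℚ)+1) * (((j:ℚ)+1) * ((j:ℚ)+2)))
      = (a0 * a0 * ((n:ℚ)-j)) * (2 * ((j:ℚ)+1) * ((n:ℚ)-j-1) * g1) := by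
    linear_combination (2 * g1 * a0 * ((j:ℚ)+1)^2) * id2
      + (2 * g1 * a0 * ((j:ℚ)+1) * ((n:ℚ)-j-1)) * id1
  have hnn : (0:ℚ) ≤ a0 * a0 * ((n:ℚ)-j) := by
    have : (j:ℚ) ≤ (n:ℚ) := by exact_mod_cast (by omega : j ≤ n)
    have h0 : (0:ℚ) ≤ (n:ℚ) - j := by linarith
    positivity
  have hM := mul_le_mul_of_nonneg_left key hnn
  rw [← hL, ← hR] at hM
  exact le_of_mul_le_mul_right hM hp


lemma Fq_d (hE : M.E = ↑E) [M.Finite] (d : ℕ) (hd : d ≤ E.card)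
    (hgirth : ∀ I : Set α, I ⊆ M.E → I.ncard ≤ d → M.Indep I) :
    Fq M E d = d := by
  have hc0 : (0:ℚ) < (E.card.choose d : ℚ) := by exact_mod_cast Nat.choose_pos hd
  rw [Fq, G]
  have h1 : ∀ A ∈ E.powersetCard d, (matroidRank M ↑A : ℚ) = d := by
    intro A hA
    obtain ⟨hAE, hAc⟩ := mempc hA
    have hind : M.Indep ↑A := hgirth ↑A (by rw [hE]; exact_mod_cast hAE)
      (by rw [Set.ncard_coe_finset, hAc])
    rw [rank_indep hind, Set.ncard_coe_finset, hAc]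
  rw [Finset.sum_congr rfl h1, Finset.sum_const, Finset.card_powersetCard, nsmul_eq_mul]
  field_simp

lemma Fq_top (hE : M.E = ↑E) [M.Finite] :
    Fq M E E.card = (matroidRank M M.E : ℚ) := by
  rw [Fq, G, Finset.powersetCard_self, Finset.sum_singleton, Nat.choose_self, hE]
  norm_num

end Stmt5Aux

/-- If every subset of the ground set of size at most `d` is independent
(girth ≥ d+1), `d ≤ i ≤ |E|`, and `A` is a uniformly random subset of `E` of size `i`,
then `𝔼(r A) ≥ d + (r E - d) (i - d)/(|E| - d)` (the last term read as `0` when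
`|E| = d`, matching the division-by-zero convention). -/
theorem stmt_5 {α : Type*} [DecidableEq α] (M : Matroid α) (E : Finset α)
    (hE : M.E = ↑E) (d i : ℕ)
    (hgirth : ∀ I : Set α, I ⊆ M.E → I.ncard ≤ d → M.Indep I)
    (hdi : d ≤ i) (hiE : i ≤ E.card) :
    (d : ℚ) + ((matroidRank M M.E : ℚ) - d) * ((i : ℚ) - d) / ((E.card : ℚ) - d) ≤
      (∑ A ∈ E.powersetCard i, (matroidRank M ↑A : ℚ)) /
        ((E.powersetCard i).card : ℚ) := by
  classical
  open Stmt5Aux in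
  have hMfin : M.Finite := ⟨by rw [hE]; exact E.finite_toSet⟩
  set n := E.card with hn
  rw [Finset.card_powersetCard]
  have hFi : (∑ A ∈ E.powersetCard i, (matroidRank M ↑A : ℚ)) / ((n.choose i : ℚ))
      = Stmt5Aux.Fq M E i := rfl
  rw [hFi]
  set R := (matroidRank M M.E : ℚ) with hR
  have hfd : Stmt5Aux.Fq M E d = d := Stmt5Aux.Fq_d hE d (by omega) hgirth
  have hfn : Stmt5Aux.Fq M E n = R := Stmt5Aux.Fq_top hE
  by_cases hid : i = d
  · subst hid
    rw [hfd]
    simp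
  have hdi' : d < i := by omega
  have hdn : d < n := by omega
  set D : ℕ → ℚ := fun j => Stmt5Aux.Fq M E (j+1) - Stmt5Aux.Fq M E j with hD
  have hstep : ∀ j, j + 2 ≤ n → D (j+1) ≤ D j := by
    intro j hj
    have := Stmt5Aux.Fq_concave hE j hj
    simp only [hD]
    have h22 : j + 1 + 1 = j + 2 := rfl
    rw [h22]
    linarith
  have hpos : ∀ j, j + 1 ≤ n → 0 ≤ D j := by
    intro j hj
    have := Stmt5Aux.Fq_mono hE j hj
    simp only [hD]
    linarith
  have hmono2 : ∀ k j, j ≤ k → k + 1 ≤ n → D k ≤ D j := by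
    intro k
    induction k with
    | zero => intro j hj _; interval_cases j; exact le_rfl
    | succ k ih =>
      intro j hj hk
      rcases Nat.eq_or_lt_of_le hj with h | h
      · rw [h]
      · exact le_trans (hstep k (by omega)) (ih j (by omega) (by omega))
  have htel : ∀ a b, a ≤ b → Stmt5Aux.Fq M E b - Stmt5Aux.Fq M E a
      = ∑ j ∈ Finset.Ico a b, D j := by
    intro a b hab
    induction b, hab using Nat.le_induction with
    | base => simp
    | succ b hab ih =>
      rw [Finset.sum_Ico_succ_top (by omega), ← ih]
      simp only [hD]
      ring
  have h1 : ((i:ℚ) - d) * D (i-1) ≤ Stmt5Aux.Fq M E i - Stmt5Aux.Fq M E d := by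
    rw [htel d i (le_of_lt hdi')]
    have hb : ∀ j ∈ Finset.Ico d i, D (i-1) ≤ D j := by
      intro j hj
      rw [Finset.mem_Ico] at hj
      exact hmono2 (i-1) j (by omega) (by omega)
    have := Finset.card_nsmul_le_sum _ _ _ hb
    rw [Nat.card_Ico, nsmul_eq_mul] at this
    calc ((i:ℚ) - d) * D (i-1) = ((i - d : ℕ) : ℚ) * D (i-1) := by
          rw [Nat.cast_sub (le_of_lt hdi')]
      _ ≤ _ := this
  have h2 : Stmt5Aux.Fq M E n - Stmt5Aux.Fq M E i ≤ ((n:ℚ) - i) * D (i-1) := by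
    rw [htel i n hiE]
    have hb : ∀ j ∈ Finset.Ico i n, D j ≤ D (i-1) := by
      intro j hj
      rw [Finset.mem_Ico] at hj
      exact hmono2 j (i-1) (by omega) (by omega)
    have := Finset.sum_le_card_nsmul _ _ _ hb
    rw [Nat.card_Ico, nsmul_eq_mul] at this
    calc ∑ j ∈ Finset.Ico i n, D j ≤ ((n - i : ℕ) : ℚ) * D (i-1) := this
      _ = ((n:ℚ) - i) * D (i-1) := by rw [Nat.cast_sub hiE]
  have h0 : 0 ≤ D (i-1) := hpos (i-1) (by omega)
  rw [hfd] at h1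
  rw [hfn] at h2
  have hin : (i:ℚ) ≤ (n:ℚ) := by exact_mod_cast hiE
  have hdiq : (d:ℚ) ≤ (i:ℚ) := by exact_mod_cast hdi
  have hdnq : (d:ℚ) < (n:ℚ) := by exact_mod_cast hdn
  have hintA : (0:ℚ) ≤ ((n:ℚ) - i) * ((Stmt5Aux.Fq M E i - (d:ℚ)) - ((i:ℚ) - d) * D (i-1)) :=
    mul_nonneg (by linarith) (by linarith)
  have hintB : (0:ℚ) ≤ ((i:ℚ) - d) * (((n:ℚ) - i) * D (i-1) - (R - Stmt5Aux.Fq M E i)) :=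
    mul_nonneg (by linarith) (by linarith)
  have goal2 : (R - d) * ((i:ℚ) - d) ≤ (Stmt5Aux.Fq M E i - d) * ((n:ℚ) - d) := by
    nlinarith [hintA, hintB]
  have h3 : (R - d) * ((i:ℚ) - d) / ((n:ℚ) - d) ≤ Stmt5Aux.Fq M E i - d := by
    rw [div_le_iff₀ (by linarith)]
    linarith [goal2]
  linarith
end

section
/- Let M be a matroid on a ground set E of size k with rank function r, such that every subset of E of size at most d is independent and r(E) ≥ d + t for some integer t ≥ 0. For each 0 ≤ i ≤ k, let A_i be a uniformly random subset of E of size i. Then (1/(k+1)) · ∑_{i=0}^{k} 𝔼(r(A_i)) ≥ d + (t·(k − d + 1) − d(d+1)) / (2(k+1)). -/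
open Set


lemma mr_eq_of_basis' {α : Type*} (M : Matroid α) {X I : Set α} (hX : X.Finite)
    (hI : M.IsBasis' I X) : matroidRank M X = I.ncard := by
  have hub : ∀ n ∈ {n : ℕ | ∃ J : Set α, J ⊆ X ∧ M.Indep J ∧ J.ncard = n}, n ≤ I.ncard := by
    rintro n ⟨J, hJX, hJind, rfl⟩
    obtain ⟨J', hJ', hJJ'⟩ := hJind.subset_isBasis'_of_subset hJX
    have h1 : J.encard ≤ I.encard :=
      le_trans (Set.encard_le_encard hJJ') (hJ'.encard_eq_encard hI).le
    have hIfin : I.Finite := hX.subset hI.subset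
    rw [Set.ncard, Set.ncard]
    exact ENat.toNat_le_toNat h1 hIfin.encard_lt_top.ne
  exact le_antisymm (csSup_le ⟨I.ncard, I, hI.subset, hI.indep, rfl⟩ hub)
    (le_csSup ⟨I.ncard, hub⟩ ⟨I, hI.subset, hI.indep, rfl⟩)

lemma mr_indep {α : Type*} (M : Matroid α) {X : Set α} (hX : X.Finite) (h : M.Indep X) :
    matroidRank M X = X.ncard :=
  mr_eq_of_basis' M hX h.isBasis_self.isBasis'

lemma mr_le_of_indep {α : Type*} (M : Matroid α) {X I : Set α} (hX : X.Finite)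
    (hI : M.Indep I) (hIX : I ⊆ X) : I.ncard ≤ matroidRank M X := by
  obtain ⟨J, hJ⟩ := M.exists_isBasis' X
  rw [mr_eq_of_basis' M hX hJ]
  obtain ⟨J', hJ', hJJ'⟩ := hI.subset_isBasis'_of_subset hIX
  have h1 : I.encard ≤ J.encard :=
    le_trans (Set.encard_le_encard hJJ') (hJ'.encard_eq_encard hJ).le
  rw [Set.ncard, Set.ncard]
  exact ENat.toNat_le_toNat h1 ((hX.subset hJ.subset).encard_lt_top.ne)

lemma mr_submod {α : Type*} (M : Matroid α) {X Y : Set α} (hX : X.Finite) (hY : Y.Finite) :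
    matroidRank M (X ∪ Y) + matroidRank M (X ∩ Y) ≤ matroidRank M X + matroidRank M Y := by
  obtain ⟨I, hI⟩ := M.exists_isBasis' (X ∩ Y)
  obtain ⟨J, hJ, hIJ⟩ := hI.indep.subset_isBasis'_of_subset (hI.subset.trans (inter_subset_left.trans subset_union_left))
  have hJfin : J.Finite := (hX.union hY).subset hJ.subset
  have hIeq : J ∩ (X ∩ Y) = I := hI.inter_eq_of_subset_indep hIJ hJ.indep
  rw [mr_eq_of_basis' M (hX.union hY) hJ, mr_eq_of_basis' M (hX.inter_of_left Y) hI]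
  have h1 : (J ∩ X).ncard ≤ matroidRank M X :=
    mr_le_of_indep M hX (hJ.indep.subset inter_subset_left) inter_subset_right
  have h2 : (J ∩ Y).ncard ≤ matroidRank M Y :=
    mr_le_of_indep M hY (hJ.indep.subset inter_subset_left) inter_subset_right
  have hcup : (J ∩ X) ∪ (J ∩ Y) = J := by
    rw [← inter_union_distrib_left, inter_eq_left]; exact hJ.subset
  have hcap : (J ∩ X) ∩ (J ∩ Y) = I := by rw [← hIeq]; ext a; simp; tauto
  have hie := Set.ncard_union_add_ncard_inter (J ∩ X) (J ∩ Y)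
    (hJfin.inter_of_left X) (hJfin.inter_of_left Y)
  rw [hcup, hcap] at hie
  omega
open Finset
lemma erase_sum {α : Type*} [DecidableEq α] (E : Finset α) (j : ℕ) (g : Finset α → ℚ) :
    ∑ A ∈ E.powersetCard (j+1), ∑ x ∈ A, g (A.erase x)
      = ((E.card - j : ℕ) : ℚ) * ∑ B ∈ E.powersetCard j, g B := by
  have h1 : ∑ A ∈ E.powersetCard (j+1), ∑ x ∈ A, g (A.erase x)
      = ∑ B ∈ E.powersetCard j, ∑ x ∈ E \ B, g B := by
    rw [Finset.sum_sigma', Finset.sum_sigma']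
    apply Finset.sum_nbij' (fun p => (⟨p.1.erase p.2, p.2⟩ : Σ _ : Finset α, α))
      (fun p => (⟨insert p.2 p.1, p.2⟩ : Σ _ : Finset α, α))
    · rintro ⟨A, x⟩ hp
      simp only [Finset.mem_sigma, Finset.mem_powersetCard] at hp ⊢
      obtain ⟨⟨hAE, hAc⟩, hx⟩ := hp
      refine ⟨⟨(Finset.erase_subset _ _).trans hAE, ?_⟩, ?_⟩
      · rw [Finset.card_erase_of_mem hx, hAc]; omega
      · simp [Finset.mem_sdiff, hAE hx]
    · rintro ⟨B, x⟩ hp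
      simp only [Finset.mem_sigma, Finset.mem_powersetCard, Finset.mem_sdiff] at hp ⊢
      obtain ⟨⟨hBE, hBc⟩, hx, hxB⟩ := hp
      refine ⟨⟨Finset.insert_subset hx hBE, ?_⟩, Finset.mem_insert_self _ _⟩
      rw [Finset.card_insert_of_notMem hxB, hBc]
    · rintro ⟨A, x⟩ hp
      simp only [Finset.mem_sigma] at hp
      simp [Finset.insert_erase hp.2]
    · rintro ⟨B, x⟩ hp
      simp only [Finset.mem_sigma, Finset.mem_sdiff] at hp
      simp [Finset.erase_insert hp.2.2]
    · rintro ⟨A, x⟩ _; rfl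
  rw [h1, Finset.mul_sum]
  apply Finset.sum_congr rfl
  intro B hB
  rw [Finset.mem_powersetCard] at hB
  rw [Finset.sum_const, Finset.card_sdiff_of_subset hB.1, hB.2, nsmul_eq_mul]

lemma pointwise_submod {α : Type*} [DecidableEq α] (M : Matroid α) (E : Finset α)
    (hE : M.E = ↑E) {A : Finset α} (hA : A ⊆ E) {x y : α} (hx : x ∈ A) (hy : y ∈ A.erase x) :
    (matroidRank M ↑A : ℚ) + (matroidRank M ↑((A.erase x).erase y) : ℚ)
      ≤ (matroidRank M ↑(A.erase x) : ℚ) + (matroidRank M ↑(A.erase y) : ℚ) := by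
  obtain ⟨hyx, hyA⟩ := Finset.mem_erase.mp hy
  have hu' : (A.erase x) ∪ (A.erase y) = A := by
    ext a
    simp only [Finset.mem_union, Finset.mem_erase]
    constructor
    · rintro (⟨_, h⟩ | ⟨_, h⟩) <;> exact h
    · intro ha
      rcases eq_or_ne a x with rfl | hax
      · exact Or.inr ⟨Ne.symm hyx, ha⟩
      · exact Or.inl ⟨hax, ha⟩
  have hi' : (A.erase x) ∩ (A.erase y) = (A.erase x).erase y := by
    ext a
    simp only [Finset.mem_inter, Finset.mem_erase]
    tauto
  have hu : (↑(A.erase x) : Set α) ∪ ↑(A.erase y) = ↑A := by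
    rw [← Finset.coe_union, hu']
  have hi : (↑(A.erase x) : Set α) ∩ ↑(A.erase y) = ↑((A.erase x).erase y) := by
    rw [← Finset.coe_inter, hi']
  have hsub := mr_submod M (X := ↑(A.erase x)) (Y := ↑(A.erase y))
    (A.erase x).finite_toSet (A.erase y).finite_toSet
  rw [hu, hi] at hsub
  exact_mod_cast hsub

lemma star {α : Type*} [DecidableEq α] (M : Matroid α) (E : Finset α)
    (hE : M.E = ↑E) (m : ℕ) (hm : m + 2 ≤ E.card) :
    ((m:ℚ)+1) * ((m:ℚ)+2) * ∑ A ∈ E.powersetCard (m+2), (matroidRank M ↑A : ℚ)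
      + ((E.card : ℚ) - m - 1) * ((E.card : ℚ) - m) * ∑ A ∈ E.powersetCard m, (matroidRank M ↑A : ℚ)
      ≤ 2 * ((m:ℚ)+1) * ((E.card : ℚ) - m - 1) * ∑ A ∈ E.powersetCard (m+1), (matroidRank M ↑A : ℚ) := by
  set rkq : Finset α → ℚ := fun A => (matroidRank M ↑A : ℚ) with hrkq
  -- the summed submodular inequality
  have key : ∑ A ∈ E.powersetCard (m+2), ∑ x ∈ A, ∑ y ∈ A.erase x,
        (rkq A + rkq ((A.erase x).erase y))
      ≤ ∑ A ∈ E.powersetCard (m+2), ∑ x ∈ A, ∑ y ∈ A.erase x,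
        (rkq (A.erase x) + rkq (A.erase y)) := by
    refine Finset.sum_le_sum fun A hA => Finset.sum_le_sum fun x hx => Finset.sum_le_sum fun y hy => ?_
    have hAE : A ⊆ E := (Finset.mem_powersetCard.mp hA).1
    exact pointwise_submod M E hE hAE hx hy
  have hcardA : ∀ A ∈ E.powersetCard (m+2), A.card = m + 2 :=
    fun A hA => (Finset.mem_powersetCard.mp hA).2
  -- T1
  have hT1 : ∑ A ∈ E.powersetCard (m+2), ∑ x ∈ A, ∑ y ∈ A.erase x, rkq A
      = ((m:ℚ)+1) * ((m:ℚ)+2) * ∑ A ∈ E.powersetCard (m+2), rkq A := by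
    rw [Finset.mul_sum]
    refine Finset.sum_congr rfl fun A hA => ?_
    have hc := hcardA A hA
    rw [Finset.sum_congr rfl (fun x hx => by
      rw [Finset.sum_const, Finset.card_erase_of_mem hx, hc, nsmul_eq_mul]),
      Finset.sum_const, hc, nsmul_eq_mul]
    push_cast; ring
  -- T2
  have hT2 : ∑ A ∈ E.powersetCard (m+2), ∑ x ∈ A, ∑ y ∈ A.erase x, rkq ((A.erase x).erase y)
      = ((E.card - (m+1) : ℕ) : ℚ) * (((E.card - m : ℕ) : ℚ) * ∑ B ∈ E.powersetCard m, rkq B) := by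
    rw [erase_sum E (m+1) (fun C => ∑ y ∈ C, rkq (C.erase y)), erase_sum E m rkq]
  -- T3
  have hT3 : ∑ A ∈ E.powersetCard (m+2), ∑ x ∈ A, ∑ y ∈ A.erase x, rkq (A.erase x)
      = ((m:ℚ)+1) * (((E.card - (m+1) : ℕ) : ℚ) * ∑ B ∈ E.powersetCard (m+1), rkq B) := by
    have step1 : ∑ A ∈ E.powersetCard (m+2), ∑ x ∈ A, ∑ y ∈ A.erase x, rkq (A.erase x)
        = ∑ A ∈ E.powersetCard (m+2), ∑ x ∈ A, ((m:ℚ)+1) * rkq (A.erase x) := by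
      refine Finset.sum_congr rfl fun A hA => Finset.sum_congr rfl fun x hx => ?_
      rw [Finset.sum_const, Finset.card_erase_of_mem hx, hcardA A hA, nsmul_eq_mul]
      push_cast; ring
    rw [step1, erase_sum E (m+1) (fun C => ((m:ℚ)+1) * rkq C), ← Finset.mul_sum]
    ring
  -- T4
  have hT4 : ∑ A ∈ E.powersetCard (m+2), ∑ x ∈ A, ∑ y ∈ A.erase x, rkq (A.erase y)
      = ((m:ℚ)+1) * (((E.card - (m+1) : ℕ) : ℚ) * ∑ B ∈ E.powersetCard (m+1), rkq B) := by
    have step1 : ∑ A ∈ E.powersetCard (m+2), ∑ x ∈ A, ∑ y ∈ A.erase x, rkq (A.erase y)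
        = ∑ A ∈ E.powersetCard (m+2), ∑ x ∈ A, ((m:ℚ)+1) * rkq (A.erase x) := by
      refine Finset.sum_congr rfl fun A hA => ?_
      have hc := hcardA A hA
      have hinner : ∀ x ∈ A, ∑ y ∈ A.erase x, rkq (A.erase y)
          = (∑ y ∈ A, rkq (A.erase y)) - rkq (A.erase x) := fun x hx =>
        Finset.sum_erase_eq_sub hx
      rw [Finset.sum_congr rfl hinner, Finset.sum_sub_distrib, Finset.sum_const, hc,
        nsmul_eq_mul, ← Finset.mul_sum]
      push_cast; ring
    rw [step1, erase_sum E (m+1) (fun C => ((m:ℚ)+1) * rkq C), ← Finset.mul_sum]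
    ring
  simp only [Finset.sum_add_distrib] at key
  rw [hT1, hT2, hT3, hT4] at key
  have c1 : ((E.card - (m+1) : ℕ) : ℚ) = (E.card : ℚ) - m - 1 := by
    have : ((m:ℕ)+1) ≤ E.card := by omega
    push_cast [Nat.cast_sub this]; ring
  have c2 : ((E.card - m : ℕ) : ℚ) = (E.card : ℚ) - m := by
    have : m ≤ E.card := by omega
    push_cast [Nat.cast_sub this]; ring
  rw [c1, c2] at key
  linarith [key]

lemma conc {α : Type*} [DecidableEq α] (M : Matroid α) (E : Finset α) (hE : M.E = ↑E)
    (m : ℕ) (hm : m + 2 ≤ E.card) :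
    (∑ A ∈ E.powersetCard (m+2), (matroidRank M ↑A : ℚ)) / (E.card.choose (m+2) : ℚ)
      + (∑ A ∈ E.powersetCard m, (matroidRank M ↑A : ℚ)) / (E.card.choose m : ℚ)
      ≤ 2 * ((∑ A ∈ E.powersetCard (m+1), (matroidRank M ↑A : ℚ)) / (E.card.choose (m+1) : ℚ)) := by
  have hstar := star M E hE m hm
  set k := E.card with hk
  set S2 := ∑ A ∈ E.powersetCard (m+2), (matroidRank M ↑A : ℚ) with hS2d
  set S1 := ∑ A ∈ E.powersetCard (m+1), (matroidRank M ↑A : ℚ) with hS1d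
  set S0 := ∑ A ∈ E.powersetCard m, (matroidRank M ↑A : ℚ) with hS0d
  set C2 := (k.choose (m+2) : ℚ) with hC2d
  set C1 := (k.choose (m+1) : ℚ) with hC1d
  set C0 := (k.choose m : ℚ) with hC0d
  have hC2 : (0:ℚ) < C2 := by rw [hC2d]; exact_mod_cast Nat.choose_pos hm
  have hC1 : (0:ℚ) < C1 := by rw [hC1d]; exact_mod_cast Nat.choose_pos (by omega)
  have hC0 : (0:ℚ) < C0 := by rw [hC0d]; exact_mod_cast Nat.choose_pos (by omega)
  have hkm : ((m:ℚ)) + 2 ≤ (k:ℚ) := by exact_mod_cast hm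
  have e1c : C2 * ((m:ℚ)+2) = C1 * ((k:ℚ) - m - 1) := by
    have h := Nat.choose_succ_right_eq k (m+1)
    have hle : m+1 ≤ k := by omega
    have h' : ((k.choose (m+2) * (m+2) : ℕ) : ℚ) = ((k.choose (m+1) * (k - (m+1)) : ℕ) : ℚ) := by
      exact_mod_cast congrArg (Nat.cast : ℕ → ℚ) h
    push_cast [Nat.cast_sub hle] at h'
    rw [hC2d, hC1d]; linarith [h']
  have e2c : C1 * ((m:ℚ)+1) = C0 * ((k:ℚ) - m) := by
    have h := Nat.choose_succ_right_eq k m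
    have hle : m ≤ k := by omega
    have h' : ((k.choose (m+1) * (m+1) : ℕ) : ℚ) = ((k.choose m * (k - m) : ℕ) : ℚ) := by
      exact_mod_cast congrArg (Nat.cast : ℕ → ℚ) h
    push_cast [Nat.cast_sub hle] at h'
    rw [hC1d, hC0d]; linarith [h']
  have hS2e : S2 = (S2 / C2) * C2 := (div_mul_cancel₀ _ hC2.ne').symm
  have hS1e : S1 = (S1 / C1) * C1 := (div_mul_cancel₀ _ hC1.ne').symm
  have hS0e : S0 = (S0 / C0) * C0 := (div_mul_cancel₀ _ hC0.ne').symm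
  rw [hS2e, hS1e, hS0e] at hstar
  set F2 := S2 / C2 with hF2
  set F1 := S1 / C1 with hF1
  set F0 := S0 / C0 with hF0
  clear_value F2 F1 F0
  have hD : (0:ℚ) < ((m:ℚ)+1) * ((k:ℚ) - m - 1) * C1 := by
    apply mul_pos (mul_pos (by positivity) (by linarith)) hC1
  have h2 : (((m:ℚ)+1) * ((k:ℚ) - m - 1) * C1) * (F2 + F0)
      ≤ (((m:ℚ)+1) * ((k:ℚ) - m - 1) * C1) * (2 * F1) := by
    calc (((m:ℚ)+1) * ((k:ℚ) - m - 1) * C1) * (F2 + F0)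
        = ((m:ℚ)+1) * ((m:ℚ)+2) * (F2 * C2)
          + ((k:ℚ) - (m:ℚ) - 1) * ((k:ℚ) - m) * (F0 * C0) := by
          linear_combination (-(((m:ℚ)+1) * F2)) * e1c + (((k:ℚ) - m - 1) * F0) * e2c
      _ ≤ 2 * ((m:ℚ)+1) * ((k:ℚ) - m - 1) * (F1 * C1) := hstar
      _ = (((m:ℚ)+1) * ((k:ℚ) - m - 1) * C1) * (2 * F1) := by ring
  exact le_of_mul_le_mul_left h2 hD

lemma gaussQ (n : ℕ) : ∑ j ∈ Finset.range n, (j:ℚ) = n * (n - 1) / 2 := by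
  induction n with
  | zero => simp
  | succ n ih => rw [Finset.sum_range_succ, ih]; push_cast; ring

lemma final_sum {d t k : ℕ} (hdk : d ≤ k) (F : ℕ → ℚ)
    (hFlow : ∀ i, i ≤ d → F i = i)
    (hFk : (d:ℚ) + t ≤ F k)
    (hconc : ∀ m, m + 2 ≤ k → F (m+2) + F m ≤ 2 * F (m+1)) :
    (d:ℚ) * (k+1) + ((t:ℚ) * ((k:ℚ) - d + 1) - (d:ℚ) * (d+1)) / 2
      ≤ ∑ i ∈ Finset.range (k+1), F i := by
  -- steps are antitone
  have hpmono : ∀ j l, j ≤ l → l + 1 ≤ k → F (l+1) - F l ≤ F (j+1) - F j := by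
    intro j l hjl
    induction l, hjl using Nat.le_induction with
    | base => intro _; exact le_refl _
    | succ l hjl ih =>
      intro hl
      have h1 := hconc l (by omega)
      have h2 := ih (by omega)
      linarith
  -- telescoping
  have htel : ∀ a b : ℕ, a ≤ b → F b - F a = ∑ j ∈ Finset.Ico a b, (F (j+1) - F j) := by
    intro a b hab
    rw [Finset.sum_Ico_eq_sub _ hab, Finset.sum_range_sub F, Finset.sum_range_sub F]
    ring
  -- key per-i bound
  have hPi : ∀ i, d ≤ i → i ≤ k →
      ((i:ℚ) - d) * (F k - F d) ≤ ((k:ℚ) - d) * (F i - F d) := by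
    intro i hdi hik
    rcases eq_or_lt_of_le hik with rfl | hik'
    · exact le_refl _
    set c : ℚ := F (i+1) - F i with hc
    have hA : ((i:ℚ) - d) * c ≤ F i - F d := by
      rw [htel d i hdi]
      have : ∀ j ∈ Finset.Ico d i, c ≤ F (j+1) - F j := by
        intro j hj
        rw [Finset.mem_Ico] at hj
        exact hpmono j i hj.2.le (by omega)
      have hb := Finset.card_nsmul_le_sum (Finset.Ico d i) _ c this
      rw [Nat.card_Ico, nsmul_eq_mul] at hb
      calc ((i:ℚ) - d) * c = ((i - d : ℕ) : ℚ) * c := by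
            rw [Nat.cast_sub hdi]
        _ ≤ _ := hb
    have hB : F k - F i ≤ ((k:ℚ) - i) * c := by
      rw [htel i k hik]
      have : ∀ j ∈ Finset.Ico i k, F (j+1) - F j ≤ c := by
        intro j hj
        rw [Finset.mem_Ico] at hj
        exact hpmono i j hj.1 (by omega)
      have hb := Finset.sum_le_card_nsmul (Finset.Ico i k) _ c this
      rw [Nat.card_Ico, nsmul_eq_mul] at hb
      calc (∑ j ∈ Finset.Ico i k, (F (j+1) - F j)) ≤ ((k - i : ℕ) : ℚ) * c := hb
        _ = ((k:ℚ) - i) * c := by rw [Nat.cast_sub hik]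
    have ha : (0:ℚ) ≤ (i:ℚ) - d := by
      have : (d:ℚ) ≤ i := by exact_mod_cast hdi
      linarith
    have hbnn : (0:ℚ) ≤ (k:ℚ) - i := by
      have : (i:ℚ) ≤ k := by exact_mod_cast hik
      linarith
    nlinarith [mul_le_mul_of_nonneg_left hB ha, mul_le_mul_of_nonneg_left hA hbnn]
  -- sum the per-i bounds
  have hFd : F d = d := hFlow d le_rfl
  have hT : (t:ℚ) ≤ F k - F d := by rw [hFd]; linarith
  have hG : ∑ i ∈ Finset.Icc d k, ((i:ℚ) - d)
      = ((k:ℚ) - d + 1) * ((k:ℚ) - d) / 2 := by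
    rw [← Finset.Ico_add_one_right_eq_Icc, Finset.sum_Ico_eq_sum_range]
    have h1 : ∀ j ∈ Finset.range (k + 1 - d), ((d + j : ℕ) : ℚ) - d = (j:ℚ) := by
      intro j _; push_cast; ring
    rw [Finset.sum_congr rfl h1, gaussQ]
    have : ((k + 1 - d : ℕ) : ℚ) = (k:ℚ) - d + 1 := by
      rw [Nat.cast_sub (by omega)]; push_cast; ring
    rw [this]; ring
  have hP : (t:ℚ) * ((k:ℚ) - d + 1) / 2 ≤ ∑ i ∈ Finset.Icc d k, (F i - F d) := by
    rcases eq_or_lt_of_le hdk with rfl | hdk'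
    · simp only [Finset.Icc_self, Finset.sum_singleton, sub_self]
      have ht0 : (t:ℚ) ≤ 0 := by rw [hFd] at hFk; linarith
      linarith
    · have hkd : (0:ℚ) < (k:ℚ) - d := by
        have : (d:ℚ) < k := by exact_mod_cast hdk'
        linarith
      have hsum : ∑ i ∈ Finset.Icc d k, ((i:ℚ) - d) * (F k - F d)
          ≤ ∑ i ∈ Finset.Icc d k, ((k:ℚ) - d) * (F i - F d) := by
        apply Finset.sum_le_sum
        intro i hi
        rw [Finset.mem_Icc] at hi
        exact hPi i hi.1 hi.2
      rw [← Finset.sum_mul, ← Finset.mul_sum, hG] at hsum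
      have hGnn : (0:ℚ) ≤ ((k:ℚ) - d + 1) * ((k:ℚ) - d) / 2 := by positivity
      have h2 : (t:ℚ) * (((k:ℚ) - d + 1) * ((k:ℚ) - d) / 2)
          ≤ ((k:ℚ) - d) * ∑ i ∈ Finset.Icc d k, (F i - F d) := by
        calc (t:ℚ) * (((k:ℚ) - d + 1) * ((k:ℚ) - d) / 2)
            ≤ (F k - F d) * (((k:ℚ) - d + 1) * ((k:ℚ) - d) / 2) :=
              mul_le_mul_of_nonneg_right hT hGnn
          _ = ((k:ℚ) - d + 1) * ((k:ℚ) - d) / 2 * (F k - F d) := by ring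
          _ ≤ _ := hsum
      rw [show ((k:ℚ) - d) * ∑ i ∈ Finset.Icc d k, (F i - F d)
          = (((k:ℚ) - d)) * ∑ i ∈ Finset.Icc d k, (F i - F d) from rfl] at h2
      have := (mul_le_mul_iff_right₀ hkd).mp (by
        calc ((k:ℚ) - d) * ((t:ℚ) * ((k:ℚ) - d + 1) / 2)
            = (t:ℚ) * (((k:ℚ) - d + 1) * ((k:ℚ) - d) / 2) := by ring
          _ ≤ ((k:ℚ) - d) * ∑ i ∈ Finset.Icc d k, (F i - F d) := h2)
      exact this
  -- assemble the full sum
  have hsplit : ∑ i ∈ Finset.range (k+1), F i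
      = (∑ i ∈ Finset.range d, F i) + ∑ i ∈ Finset.Icc d k, F i := by
    rw [Finset.range_eq_Ico, ← Finset.sum_Ico_consecutive _ (Nat.zero_le d) (by omega),
      ← Finset.range_eq_Ico, ← Finset.Ico_add_one_right_eq_Icc]
  have hlow : ∑ i ∈ Finset.range d, F i = (d:ℚ) * (d - 1) / 2 := by
    rw [Finset.sum_congr rfl (fun i hi => hFlow i (by
      rw [Finset.mem_range] at hi; omega)), gaussQ]
  have hcard : (Finset.Icc d k).card = k + 1 - d := Nat.card_Icc d k
  have hmid : ∑ i ∈ Finset.Icc d k, F i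
      = ((k:ℚ) - d + 1) * d + ∑ i ∈ Finset.Icc d k, (F i - F d) := by
    have : ∀ i ∈ Finset.Icc d k, F i = F d + (F i - F d) := fun i _ => by ring
    rw [Finset.sum_congr rfl this, Finset.sum_add_distrib, Finset.sum_const, hcard,
      nsmul_eq_mul, hFd, Nat.cast_sub (by omega)]
    push_cast; ring
  rw [hsplit, hlow, hmid]
  linarith [hP]


/-- For a matroid on a ground set of size `k` with girth at least `d+1`
and rank at least `d + t`, the average over `i = 0, …, k` of the expected rank of a
uniformly random subset of size `i` is at least
`d + (t (k - d + 1) - d (d+1)) / (2 (k+1))`. -/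
theorem stmt_6 {α : Type*} [DecidableEq α] (M : Matroid α) (E : Finset α)
    (hE : M.E = ↑E) (d t k : ℕ) (hk : E.card = k) (hdk : d ≤ k)
    (hgirth : ∀ I : Set α, I ⊆ M.E → I.ncard ≤ d → M.Indep I)
    (hrank : d + t ≤ matroidRank M M.E) :
    (d : ℚ) + ((t : ℚ) * ((k : ℚ) - d + 1) - (d : ℚ) * (d + 1)) / (2 * ((k : ℚ) + 1)) ≤
      (1 / ((k : ℚ) + 1)) * ∑ i ∈ Finset.range (k + 1),
        (∑ A ∈ E.powersetCard i, (matroidRank M ↑A : ℚ)) /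
          ((E.powersetCard i).card : ℚ) := by
  subst hk
  rw [hE] at hrank
  have hFlow : ∀ i, i ≤ d →
      (∑ A ∈ E.powersetCard i, (matroidRank M ↑A : ℚ)) / (E.card.choose i : ℚ) = (i : ℚ) := by
    intro i hid
    have hsum : ∀ A ∈ E.powersetCard i, (matroidRank M ↑A : ℚ) = (i:ℚ) := by
      intro A hA
      rw [Finset.mem_powersetCard] at hA
      have hind : M.Indep ↑A := hgirth ↑A
        (by rw [hE]; exact Finset.coe_subset.mpr hA.1)
        (by rw [Set.ncard_coe_finset, hA.2]; exact hid)
      rw [mr_indep M A.finite_toSet hind, Set.ncard_coe_finset, hA.2]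
    have hC : (E.card.choose i : ℚ) ≠ 0 := by
      exact_mod_cast (Nat.choose_pos (hid.trans hdk)).ne'
    rw [Finset.sum_congr rfl hsum, Finset.sum_const, Finset.card_powersetCard, nsmul_eq_mul]
    field_simp
  have hFk : (d:ℚ) + t ≤
      (∑ A ∈ E.powersetCard E.card, (matroidRank M ↑A : ℚ)) / (E.card.choose E.card : ℚ) := by
    rw [Finset.powersetCard_self, Finset.sum_singleton, Nat.choose_self]
    push_cast
    rw [div_one]
    exact_mod_cast hrank
  have hconcF : ∀ m, m + 2 ≤ E.card →
      (∑ A ∈ E.powersetCard (m+2), (matroidRank M ↑A : ℚ)) / (E.card.choose (m+2) : ℚ)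
        + (∑ A ∈ E.powersetCard m, (matroidRank M ↑A : ℚ)) / (E.card.choose m : ℚ)
      ≤ 2 * ((∑ A ∈ E.powersetCard (m+1), (matroidRank M ↑A : ℚ)) / (E.card.choose (m+1) : ℚ)) :=
    fun m hm => conc M E hE m hm
  have hfin := final_sum hdk
    (fun i => (∑ A ∈ E.powersetCard i, (matroidRank M ↑A : ℚ)) / (E.card.choose i : ℚ))
    hFlow hFk hconcF
  have hrw : ∀ i ∈ Finset.range (E.card+1),
      (∑ A ∈ E.powersetCard i, (matroidRank M ↑A : ℚ)) / ((E.powersetCard i).card : ℚ)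
        = (∑ A ∈ E.powersetCard i, (matroidRank M ↑A : ℚ)) / (E.card.choose i : ℚ) := by
    intro i _
    rw [Finset.card_powersetCard]
  rw [Finset.sum_congr rfl hrw]
  have hk1 : (0:ℚ) < (E.card:ℚ) + 1 := by positivity
  have heq : (d:ℚ) + ((t:ℚ)*((E.card:ℚ) - d + 1) - (d:ℚ)*((d:ℚ)+1))/(2*((E.card:ℚ)+1))
      = (1/((E.card:ℚ)+1)) * ((d:ℚ)*((E.card:ℚ)+1)
          + ((t:ℚ)*((E.card:ℚ) - d + 1) - (d:ℚ)*((d:ℚ)+1))/2) := by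
    field_simp
  rw [heq]
  exact mul_le_mul_of_nonneg_left hfin (by positivity)
end

section
/- Let G be a simple graph on n ≥ 2d + 1 vertices such that deg(u) + deg(v) ≥ n + d − 2 for all non-adjacent pairs u, v, and suppose δ(G) = d. Let v be a vertex of degree d and let T = V − N(v) − {v}. Then every vertex of T has degree exactly n − 2 in G, and G[T] is a complete graph on n − d − 1 ≥ d vertices. -/
/-- If `n ≥ 2d+1`, `deg u + deg v ≥ n + d - 2` for all non-adjacent
pairs, `δ(G) = d`, `v` has degree `d` and `T = V - N(v) - {v}`, then every vertex
of `T` has degree `n - 2`, `G[T]` is complete, and `|T| = n - d - 1 ≥ d`. -/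
theorem stmt_9 {V : Type*} [Fintype V] [DecidableEq V] [Nonempty V]
    (G : SimpleGraph V) [DecidableRel G.Adj] (d : ℕ)
    (hn : 2 * d + 1 ≤ Fintype.card V)
    (hdeg : ∀ u v : V, u ≠ v → ¬ G.Adj u v →
      Fintype.card V + d - 2 ≤ G.degree u + G.degree v)
    (hmin : G.minDegree = d) (v : V) (hv : G.degree v = d)
    (T : Finset V) (hT : T = (Finset.univ \ G.neighborFinset v).erase v) :
    (∀ t ∈ T, G.degree t = Fintype.card V - 2) ∧
      (∀ s ∈ T, ∀ t ∈ T, s ≠ t → G.Adj s t) ∧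
      T.card = Fintype.card V - d - 1 ∧ d ≤ T.card := by
  have key : ∀ t ∈ T, t ≠ v ∧ ¬ G.Adj t v := by
    intro t ht
    subst hT
    simp only [Finset.mem_erase, Finset.mem_sdiff, Finset.mem_univ, true_and,
      SimpleGraph.mem_neighborFinset] at ht
    exact ⟨ht.1, fun h => ht.2 h.symm⟩
  have hdege : ∀ t ∈ T, G.degree t = Fintype.card V - 2 := by
    intro t ht
    obtain ⟨htv, hna⟩ := key t ht
    have h1 := hdeg t v htv hna
    rw [hv] at h1
    have hsub : G.neighborFinset t ⊆ (Finset.univ.erase t).erase v := by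
      intro x hx
      rw [SimpleGraph.mem_neighborFinset] at hx
      simp only [Finset.mem_erase, Finset.mem_univ, and_true]
      exact ⟨fun h => hna (h ▸ hx), fun h => G.irrefl (h ▸ hx)⟩
    have h2 : G.degree t ≤ Fintype.card V - 2 := by
      have := Finset.card_le_card hsub
      rw [Finset.card_erase_of_mem (by simp [Ne.symm htv]),
        Finset.card_erase_of_mem (Finset.mem_univ t), Finset.card_univ] at this
      rw [SimpleGraph.degree]
      omega
    omega
  refine ⟨hdege, ?_, ?_, ?_⟩
  · intro s hs t ht hst
    by_contra hadj
    obtain ⟨hsv, hsna⟩ := key s hs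
    obtain ⟨htv, htna⟩ := key t ht
    have hcard3 : 3 ≤ Fintype.card V := by
      have : ({s, t, v} : Finset V).card ≤ Fintype.card V := by
        rw [← Finset.card_univ]; exact Finset.card_le_card (Finset.subset_univ _)
      rwa [Finset.card_insert_of_notMem (by simp [hst, hsv]),
        Finset.card_insert_of_notMem (by simp [htv]), Finset.card_singleton] at this
    have hsub : G.neighborFinset s ⊆ ((Finset.univ.erase s).erase v).erase t := by
      intro x hx
      rw [SimpleGraph.mem_neighborFinset] at hx
      simp only [Finset.mem_erase, Finset.mem_univ, and_true]
      exact ⟨fun h => hadj (h ▸ hx), fun h => hsna (h ▸ hx), fun h => G.irrefl (h ▸ hx)⟩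
    have h2 : G.degree s ≤ Fintype.card V - 3 := by
      have := Finset.card_le_card hsub
      rw [Finset.card_erase_of_mem (by simp [Ne.symm hst, htv]),
        Finset.card_erase_of_mem (by simp [Ne.symm hsv]),
        Finset.card_erase_of_mem (Finset.mem_univ s), Finset.card_univ] at this
      rw [SimpleGraph.degree]
      omega
    have h1 := hdege s hs
    omega
  · rw [hT, Finset.card_erase_of_mem (by simp [G.irrefl]),
      Finset.card_sdiff_of_subset (Finset.subset_univ _), Finset.card_univ,
      SimpleGraph.card_neighborFinset_eq_degree, hv]
  · rw [hT, Finset.card_erase_of_mem (by simp [G.irrefl]),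
      Finset.card_sdiff_of_subset (Finset.subset_univ _), Finset.card_univ,
      SimpleGraph.card_neighborFinset_eq_degree, hv]
    omega
end

section
/- Let G be a simple graph on n vertices and let X ⊆ V(G) be a nonempty set of vertices each of degree strictly greater than n/2. Then there exists a vertex v ∈ V(G) with |N(v) ∩ X| ≥ (|X| + 1)/2. -/
/-- If every vertex of a nonempty set `X` has degree `> n/2`, then
some vertex `v` satisfies `|N(v) ∩ X| ≥ (|X| + 1)/2`. -/
theorem stmt_10 {V : Type*} [Fintype V] [DecidableEq V] (G : SimpleGraph V)
    [DecidableRel G.Adj] (X : Finset V) (hX : X.Nonempty)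
    (hdeg : ∀ x ∈ X, (Fintype.card V : ℚ) / 2 < (G.degree x : ℚ)) :
    ∃ v : V, ((X.card : ℚ) + 1) / 2 ≤ ((G.neighborFinset v ∩ X).card : ℚ) := by
  by_contra h
  push_neg at h
  have hb : ∀ v : V, ((G.neighborFinset v ∩ X).card : ℚ) ≤ (X.card : ℚ) / 2 := by
    intro v
    have h1 := h v
    have hint : (G.neighborFinset v ∩ X).card * 2 ≤ X.card := by
      have h2 : (((G.neighborFinset v ∩ X).card * 2 : ℕ) : ℚ) < ((X.card + 1 : ℕ) : ℚ) := by
        push_cast; linarith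
      exact Nat.lt_succ_iff.mp (by exact_mod_cast h2)
    have h3 : (((G.neighborFinset v ∩ X).card * 2 : ℕ) : ℚ) ≤ (X.card : ℚ) := by
      exact_mod_cast hint
    push_cast at h3
    linarith
  have key : ∑ v : V, ((G.neighborFinset v ∩ X).card : ℚ)
      = ∑ x ∈ X, (G.degree x : ℚ) := by
    have e1 : ∀ v : V, G.neighborFinset v ∩ X = X.filter (fun x => G.Adj v x) := by
      intro v; ext x
      simp [SimpleGraph.mem_neighborFinset, Finset.mem_filter, and_comm]
    have e2 : ∀ x : V, G.neighborFinset x = Finset.univ.filter (fun v => G.Adj v x) := by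
      intro x; ext v
      simp [SimpleGraph.mem_neighborFinset, G.adj_comm]
    simp_rw [e1, Finset.card_filter]
    push_cast
    rw [Finset.sum_comm]
    refine Finset.sum_congr rfl (fun x _ => ?_)
    rw [SimpleGraph.degree, e2, Finset.card_filter]
    push_cast
    rfl
  have hn : 0 < Fintype.card V := Fintype.card_pos_iff.mpr ⟨hX.choose⟩
  have hsum1 : ∑ v : V, ((G.neighborFinset v ∩ X).card : ℚ)
      ≤ (Fintype.card V : ℚ) * ((X.card : ℚ) / 2) := by
    calc ∑ v : V, ((G.neighborFinset v ∩ X).card : ℚ)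
        ≤ ∑ _v : V, ((X.card : ℚ) / 2) := Finset.sum_le_sum (fun v _ => hb v)
      _ = (Fintype.card V : ℚ) * ((X.card : ℚ) / 2) := by
          simp [Finset.sum_const, mul_comm]
  have hsum2 : (X.card : ℚ) * ((Fintype.card V : ℚ) / 2)
      < ∑ x ∈ X, (G.degree x : ℚ) := by
    calc (X.card : ℚ) * ((Fintype.card V : ℚ) / 2)
        = ∑ _x ∈ X, ((Fintype.card V : ℚ) / 2) := by
          simp [Finset.sum_const, mul_comm]
      _ < ∑ x ∈ X, (G.degree x : ℚ) :=
          Finset.sum_lt_sum_of_nonempty hX (fun x hx => hdeg x hx)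
  rw [key] at hsum1
  have : (X.card : ℚ) * ((Fintype.card V : ℚ) / 2)
      = (Fintype.card V : ℚ) * ((X.card : ℚ) / 2) := by ring
  linarith
end

section
/- For every integer r ≥ 0 and all sufficiently large n (say n ≥ 2r + 4), there exists a simple graph G on n vertices that is not (r+2)-connected but satisfies deg(u) + deg(v) ≥ n + r − 1 for every pair of non-adjacent vertices u, v. Concretely, the graph obtained by gluing two complete graphs, each on at least r + 3 vertices, along a common set of r + 1 vertices has this property. -/
/-- For every `r ≥ 0` and `n ≥ 2r + 4` there is a graph on `n`
vertices which satisfies `deg u + deg v ≥ n + r - 1` for every non-adjacent pair,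
but is not `(r+2)`-connected (i.e. it is not the case that `n ≥ r + 3` and the
removal of any set of fewer than `r + 2` vertices leaves the graph connected). -/
theorem stmt_12 (r n : ℕ) (hn : 2 * r + 4 ≤ n) :
    ∃ G : SimpleGraph (Fin n),
      (∀ u v : Fin n, u ≠ v → ¬ G.Adj u v →
        n + r - 1 ≤ (G.neighborSet u).ncard + (G.neighborSet v).ncard) ∧
      ¬ (r + 3 ≤ n ∧ ∀ S : Finset (Fin n), S.card < r + 2 →
          (G.induce ((↑S : Set (Fin n))ᶜ)).Connected) := by
  set x : Fin n := ⟨r + 1, by omega⟩ with hxdef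
  set y : Fin n := ⟨r + 2, by omega⟩ with hydef
  have hx' : (x : ℕ) = r + 1 := rfl
  have hy' : (y : ℕ) = r + 2 := rfl
  set G : SimpleGraph (Fin n) := SimpleGraph.fromRel
    (fun u v => ((u : ℕ) ≤ r + 1 ∧ (v : ℕ) ≤ r + 1) ∨ ((u : ℕ) ≠ r + 1 ∧ (v : ℕ) ≠ r + 1))
    with hGdef
  have hadj : ∀ u v : Fin n, G.Adj u v ↔ u ≠ v ∧
      (((u : ℕ) ≤ r + 1 ∧ (v : ℕ) ≤ r + 1) ∨ ((u : ℕ) ≠ r + 1 ∧ (v : ℕ) ≠ r + 1)) := by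
    intro u v
    rw [hGdef, SimpleGraph.fromRel_adj]
    constructor
    · rintro ⟨h1, h2 | h2⟩ <;> exact ⟨h1, by tauto⟩
    · rintro ⟨h1, h2⟩; exact ⟨h1, Or.inl h2⟩
  -- neighbor set of x
  have hNx : G.neighborSet x = ↑(Finset.Iio x) := by
    ext w
    simp only [SimpleGraph.mem_neighborSet, hadj, Finset.coe_Iio, Set.mem_Iio, Fin.lt_def, hx']
    constructor
    · rintro ⟨h1, h2 | h2⟩
      · have hwne : (w : ℕ) ≠ r + 1 := by
          intro hw
          exact h1 (Fin.ext (by rw [hx', hw]))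
        omega
      · exact absurd hx' h2.1
    · intro hw
      refine ⟨fun h => ?_, Or.inl ⟨hx'.le, by omega⟩⟩
      have := congrArg Fin.val h
      rw [hx'] at this
      omega
  have hNxcard : (G.neighborSet x).ncard = r + 1 := by
    rw [hNx, Set.ncard_coe_finset, Fin.card_Iio]
  -- neighbor set of a vertex v with (v : ℕ) > r+1
  have hNv : ∀ v : Fin n, r + 1 < (v : ℕ) → G.neighborSet v = ({v, x} : Set (Fin n))ᶜ := by
    intro v hv
    ext w
    simp only [SimpleGraph.mem_neighborSet, hadj, Set.mem_compl_iff, Set.mem_insert_iff,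
      Set.mem_singleton_iff]
    constructor
    · rintro ⟨h1, h2 | h2⟩
      · omega
      · push_neg
        refine ⟨fun h => h1 h.symm, fun h => h2.2 ?_⟩
        rw [h, hx']
    · intro h
      push_neg at h
      refine ⟨fun hh => h.1 hh.symm, Or.inr ⟨by omega, fun hh => h.2 (Fin.ext (by rw [hx', hh]))⟩⟩
  have hNvcard : ∀ v : Fin n, r + 1 < (v : ℕ) → (G.neighborSet v).ncard = n - 2 := by
    intro v hv
    rw [hNv v hv]
    have hvx : v ≠ x := by
      intro h
      rw [h, hx'] at hv
      omega
    have h2 : ({v, x} : Set (Fin n)).ncard = 2 := Set.ncard_pair hvx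
    have h3 := Set.ncard_add_ncard_compl ({v, x} : Set (Fin n))
    rw [h2] at h3
    simp only [Set.ncard_univ, Nat.card_eq_fintype_card, Fintype.card_fin] at h3
    omega
  refine ⟨G, ?_, ?_⟩
  · intro u v huv hnadj
    rw [hadj] at hnadj
    have harith : ¬(((u : ℕ) ≤ r + 1 ∧ (v : ℕ) ≤ r + 1) ∨
        ((u : ℕ) ≠ r + 1 ∧ (v : ℕ) ≠ r + 1)) := fun h => hnadj ⟨huv, h⟩
    have key : ((u : ℕ) = r + 1 ∧ r + 1 < (v : ℕ)) ∨
        ((v : ℕ) = r + 1 ∧ r + 1 < (u : ℕ)) := by omega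
    rcases key with ⟨h1, h2⟩ | ⟨h1, h2⟩
    · have hu : u = x := Fin.ext (by rw [hx', h1])
      rw [hu, hNxcard, hNvcard v h2]; omega
    · have hv : v = x := Fin.ext (by rw [hx', h1])
      rw [hv, hNxcard, hNvcard u h2]; omega
  · rintro ⟨-, hconn⟩
    have hcard : (Finset.Iio x).card < r + 2 := by rw [Fin.card_Iio, hx']; omega
    have hc := hconn (Finset.Iio x) hcard
    have hxmem : x ∈ ((↑(Finset.Iio x) : Set (Fin n))ᶜ) := by simp
    have hymem : y ∈ ((↑(Finset.Iio x) : Set (Fin n))ᶜ) := by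
      simp only [Set.mem_compl_iff, Finset.coe_Iio, Set.mem_Iio, Fin.lt_def, hx', hy', not_lt]
      omega
    have hne : (⟨x, hxmem⟩ : ((↑(Finset.Iio x) : Set (Fin n))ᶜ : Set (Fin n))) ≠ ⟨y, hymem⟩ := by
      intro h
      have := congrArg Fin.val (Subtype.ext_iff.mp h)
      rw [hx', hy'] at this
      omega
    obtain ⟨w⟩ := hc.preconnected ⟨x, hxmem⟩ ⟨y, hymem⟩
    have hnil : ¬ w.Nil := SimpleGraph.Walk.not_nil_of_ne hne
    have hadj' := w.adj_snd hnil
    set b := w.getVert 1 with hbdef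
    have hGadj : G.Adj x (b : Fin n) := hadj'
    rw [hadj] at hGadj
    obtain ⟨h1, h2 | h2⟩ := hGadj
    · have hbS : ¬ ((b : Fin n) : ℕ) < r + 1 := by
        have := b.2
        simpa only [Set.mem_compl_iff, Finset.coe_Iio, Set.mem_Iio, Fin.lt_def, hx', not_lt,
          not_lt] using this
      have hbne : ((b : Fin n) : ℕ) ≠ r + 1 := by
        intro hh
        exact h1 (Fin.ext (by rw [hx', hh]))
      omega
    · exact h2.1 hx'
end

section
/- Let G be a simple graph on n vertices with minimum degree δ(G) = 4 and 8 ≤ n ≤ 10, satisfying deg(u) + deg(v) ≥ n + 1 for all non-adjacent pairs u, v. Let w be a vertex of degree 4, K = N(w), and T = V − K − {w}. Then 3 ≤ |T| ≤ 5, every vertex t ∈ T has deg(t) ≥ |T| + 2, and for every pair of non-adjacent vertices u, v ∈ T, the vertex u is adjacent to all vertices of G except w and v. -/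
/-- Let `δ(G) = 4`, `8 ≤ n ≤ 10`, and `deg u + deg v ≥ n + 1` for
all non-adjacent pairs. If `deg w = 4`, `K = N(w)` and `T = V - K - {w}`, then
`3 ≤ |T| ≤ 5`, every `t ∈ T` has `deg t ≥ |T| + 2`, and for non-adjacent
`u, v ∈ T`, `u` is adjacent to every vertex except `w` and `v` (and itself). -/
theorem stmt_18 {V : Type*} [Fintype V] [DecidableEq V] [Nonempty V]
    (G : SimpleGraph V) [DecidableRel G.Adj] (n : ℕ)
    (hn : Fintype.card V = n) (h8 : 8 ≤ n) (h10 : n ≤ 10)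
    (hmin : G.minDegree = 4)
    (hdeg : ∀ u v : V, u ≠ v → ¬ G.Adj u v →
      n + 1 ≤ G.degree u + G.degree v)
    (w : V) (hw : G.degree w = 4)
    (T : Finset V) (hT : T = (Finset.univ \ G.neighborFinset w).erase w) :
    (3 ≤ T.card ∧ T.card ≤ 5) ∧
      (∀ t ∈ T, T.card + 2 ≤ G.degree t) ∧
      (∀ u ∈ T, ∀ v ∈ T, u ≠ v → ¬ G.Adj u v →
        ∀ x : V, x ≠ w → x ≠ v → x ≠ u → G.Adj u x) := by
  have hwmem : w ∈ Finset.univ \ G.neighborFinset w := by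
    simp [SimpleGraph.mem_neighborFinset]
  have hTcard : T.card = n - 5 := by
    rw [hT, Finset.card_erase_of_mem hwmem,
      Finset.card_sdiff_of_subset (Finset.subset_univ _)]
    rw [SimpleGraph.card_neighborFinset_eq_degree, hw, Finset.card_univ, hn]
    omega
  have hTadj : ∀ t ∈ T, ¬ G.Adj t w ∧ t ≠ w := by
    intro t ht
    rw [hT] at ht
    simp only [Finset.mem_erase, Finset.mem_sdiff, Finset.mem_univ, true_and,
      SimpleGraph.mem_neighborFinset] at ht
    exact ⟨fun h => ht.2 h.symm, ht.1⟩
  have hdegT : ∀ t ∈ T, n - 3 ≤ G.degree t := by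
    intro t ht
    obtain ⟨hna, htw⟩ := hTadj t ht
    have := hdeg t w htw hna
    omega
  refine ⟨⟨by omega, by omega⟩, ?_, ?_⟩
  · intro t ht
    have := hdegT t ht
    omega
  · intro u hu v hv huv hnadj x hxw hxv hxu
    by_contra hux
    obtain ⟨huw, hunw⟩ := hTadj u hu
    obtain ⟨hvw, hvnw⟩ := hTadj v hv
    have hsub : G.neighborFinset u ⊆ Finset.univ \ {u, w, v, x} := by
      intro y hy
      rw [SimpleGraph.mem_neighborFinset] at hy
      simp only [Finset.mem_sdiff, Finset.mem_univ, true_and, Finset.mem_insert,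
        Finset.mem_singleton]
      push_neg
      refine ⟨fun h => G.loopless.irrefl u (h ▸ hy), fun h => huw (h ▸ hy),
        fun h => hnadj (h ▸ hy), fun h => hux (h ▸ hy)⟩
    have hcard4 : ({u, w, v, x} : Finset V).card = 4 := by
      rw [Finset.card_insert_of_notMem (by simp [hunw, huv, Ne.symm hxu]),
        Finset.card_insert_of_notMem (by simp [Ne.symm hvnw, Ne.symm hxw]),
        Finset.card_insert_of_notMem (by simp [Ne.symm hxv]),
        Finset.card_singleton]
    have hle := Finset.card_le_card hsub
    rw [Finset.card_sdiff_of_subset (Finset.subset_univ _), hcard4, Finset.card_univ, hn,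
      SimpleGraph.card_neighborFinset_eq_degree] at hle
    have := hdegT u hu
    omega
end
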